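/- Let E be a real normed vector space, p* ∈ E, j ∈ {1,2,3}, and let x : ℕ → E be a sequence with ‖x t − p*‖ → 0 as t → ∞. Let m : ℕ → E satisfy, for every integer t ≥ 5, m t = ((t+1−j)/(t+1)) • m(t−1) + (j/(t+1)) • x(t−1), with arbitrary initial value m 4. Then ‖m t − p*‖ → 0 as t → ∞. In particular, convergence propagates backwards through the memory cascade: if memory unit j+1 converges to p*, so does memory unit j. -/

import Mathlib

/-- Convergence propagates backwards through the memory cascade: for
`j ∈ {1,2,3}`, if the incoming signal `x t` (the next memory unit) converges to
`p*` in norm, then the memory unit `m` defined for `t ≥ 5` by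
`m t = ((t+1−j)/(t+1)) • m (t−1) + (j/(t+1)) • x (t−1)` converges to `p*`. -/
theorem cascade_backward_convergence
    {E : Type*} [NormedAddCommGroup E] [NormedSpace ℝ E]
    (pstar : E) (j : ℕ) (hj : j ∈ ({1, 2, 3} : Set ℕ)) (x m : ℕ → E)
    (hx : Filter.Tendsto (fun t : ℕ => ‖x t - pstar‖) Filter.atTop (nhds 0))
    (hm : ∀ t : ℕ, 5 ≤ t →
      m t = (((t : ℝ) + 1 - (j : ℝ)) / ((t : ℝ) + 1)) • m (t - 1)
        + (((j : ℝ)) / ((t : ℝ) + 1)) • x (t - 1)) :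
    Filter.Tendsto (fun t : ℕ => ‖m t - pstar‖) Filter.atTop (nhds 0) := by
  have hj13 : 1 ≤ j ∧ j ≤ 3 := by
    simp only [Set.mem_insert_iff, Set.mem_singleton_iff] at hj
    rcases hj with h | h | h <;> omega
  obtain ⟨hj1, hj3⟩ := hj13
  rw [Metric.tendsto_atTop] at hx ⊢
  intro ε hε
  obtain ⟨N0, hN0⟩ := hx (ε / 2) (by positivity)
  set N : ℕ := max N0 5 with hNdef
  set C : ℝ := ‖m N - pstar‖ with hCdef
  have hC0 : 0 ≤ C := norm_nonneg _
  have key : ∀ t, N ≤ t →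
      ‖m t - pstar‖ ≤ ε / 2 + C * ((N : ℝ) + 1) / ((t : ℝ) + 1) := by
    intro t ht
    induction t, ht using Nat.le_induction with
    | base =>
      have : ((N : ℝ) + 1) / ((N : ℝ) + 1) = 1 := by
        apply div_self; positivity
      rw [mul_div_assoc, this, mul_one]
      linarith
    | succ t ht ih =>
      have h5 : 5 ≤ t + 1 := by
        have : 5 ≤ N := le_max_right _ _
        omega
      have hrec := hm (t + 1) h5
      simp only [Nat.add_sub_cancel] at hrec
      have htR : (0 : ℝ) < (t : ℝ) + 2 := by positivity
      set a : ℝ := ((t : ℝ) + 2 - (j : ℝ)) / ((t : ℝ) + 2) with hadef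
      set b : ℝ := (j : ℝ) / ((t : ℝ) + 2) with hbdef
      have ht5 : (5 : ℝ) ≤ (t : ℝ) := by
        exact_mod_cast le_trans (le_max_right N0 5) ht
      have hjt : (j : ℝ) ≤ (t : ℝ) + 2 := by
        have : (j : ℝ) ≤ 3 := by exact_mod_cast hj3
        linarith
      have hj1R : (1 : ℝ) ≤ (j : ℝ) := by exact_mod_cast hj1
      have ha0 : 0 ≤ a := by
        apply div_nonneg _ (le_of_lt htR); linarith
      have hb0 : 0 ≤ b := by positivity
      have hab : a + b = 1 := by
        rw [hadef, hbdef, ← add_div, div_eq_one_iff_eq (ne_of_gt htR)]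
        ring
      have hrec' : m (t + 1) = a • m t + b • x t := by
        rw [hrec]; congr 1 <;> · congr 1 <;> push_cast <;> ring
      have hsplit : m (t + 1) - pstar = a • (m t - pstar) + b • (x t - pstar) := by
        have h : a • (m t - pstar) + b • (x t - pstar)
            = a • m t + b • x t - (a + b) • pstar := by
          rw [add_smul, smul_sub, smul_sub]; abel
        rw [hrec', h, hab, one_smul]
      have hnorm : ‖m (t + 1) - pstar‖ ≤ a * ‖m t - pstar‖ + b * ‖x t - pstar‖ := by
        rw [hsplit]
        calc ‖a • (m t - pstar) + b • (x t - pstar)‖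
            ≤ ‖a • (m t - pstar)‖ + ‖b • (x t - pstar)‖ := norm_add_le _ _
          _ = a * ‖m t - pstar‖ + b * ‖x t - pstar‖ := by
              rw [norm_smul, norm_smul, Real.norm_of_nonneg ha0,
                Real.norm_of_nonneg hb0]
      have hxt : ‖x t - pstar‖ < ε / 2 := by
        have := hN0 t (le_trans (le_trans (le_max_left _ _) ht) (le_refl t))
        rwa [Real.dist_eq, sub_zero, abs_of_nonneg (norm_nonneg _)] at this
      have hstep : a * (ε / 2 + C * ((N : ℝ) + 1) / ((t : ℝ) + 1)) + b * (ε / 2)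
          ≤ ε / 2 + C * ((N : ℝ) + 1) / ((t : ℝ) + 1 + 1) := by
        have h1 : a * (ε / 2) + b * (ε / 2) = ε / 2 := by
          rw [← add_mul, hab, one_mul]
        have htR1 : (0 : ℝ) < (t : ℝ) + 1 := by positivity
        have h2 : a * (C * ((N : ℝ) + 1) / ((t : ℝ) + 1))
            ≤ C * ((N : ℝ) + 1) / ((t : ℝ) + 2) := by
          have hX : 0 ≤ C * ((N : ℝ) + 1) := by positivity
          rw [hadef, div_mul_div_comm, div_le_div_iff₀ (by positivity) htR]
          nlinarith [mul_nonneg (mul_nonneg hX (le_of_lt htR))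
            (by linarith : (0 : ℝ) ≤ (j : ℝ) - 1)]
        have : ((t : ℝ) + 1 + 1) = (t : ℝ) + 2 := by ring
        rw [this]
        nlinarith [h2]
      have hcast : ((t + 1 : ℕ) : ℝ) = (t : ℝ) + 1 := by push_cast; ring
      rw [hcast]
      calc ‖m (t + 1) - pstar‖
          ≤ a * ‖m t - pstar‖ + b * ‖x t - pstar‖ := hnorm
        _ ≤ a * (ε / 2 + C * ((N : ℝ) + 1) / ((t : ℝ) + 1)) + b * (ε / 2) := by
            have := ih
            nlinarith [norm_nonneg (x t - pstar)]
        _ ≤ ε / 2 + C * ((N : ℝ) + 1) / ((t : ℝ) + 1 + 1) := hstep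
  -- choose T large enough
  set r : ℝ := 2 * C * ((N : ℝ) + 1) / ε with hrdef
  have hr0 : 0 ≤ r := by positivity
  refine ⟨max N ⌈r⌉₊, fun t ht => ?_⟩
  have htN : N ≤ t := le_trans (le_max_left _ _) ht
  have htr : r ≤ (t : ℝ) := by
    have h1 : (⌈r⌉₊ : ℝ) ≤ (t : ℝ) := by
      exact_mod_cast le_trans (le_max_right _ _) ht
    exact le_trans (Nat.le_ceil r) h1
  have htail : C * ((N : ℝ) + 1) / ((t : ℝ) + 1) < ε / 2 := by
    have htR1 : (0 : ℝ) < (t : ℝ) + 1 := by positivity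
    rw [div_lt_iff₀ htR1]
    have : r * ε = 2 * C * ((N : ℝ) + 1) := by
      rw [hrdef, div_mul_cancel₀]
      exact ne_of_gt hε
    nlinarith
  have := key t htN
  rw [Real.dist_eq, sub_zero, abs_of_nonneg (norm_nonneg _)]
  linarith
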